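/- Let d ≤ m be positive integers and let Q ∈ ℝ^{d×d} be a symmetric matrix with eigenvalues λ₁, …, λ_d. Then there exist a ∈ ℝ^m and W ∈ ℝ^{m×d}, with a_i = 0 and the i-th row of W equal to 0 for all i > d, such that a^⊤ σ(W x) = x^⊤ Q x for all x ∈ ℝ^d, where σ(t) = t² is applied entrywise, and ‖a‖² + ‖W‖_F² = 2·Σ_{i=1}^d |λ_i|^{2/3}. -/

import Mathlib

open Matrix

private lemma sum_extend {M : Type*} [AddCommMonoid M] (d m : ℕ) (hdm : d ≤ m)
    (g : Fin d → M) :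
    (∑ i : Fin m, if h : (i : ℕ) < d then g ⟨i, h⟩ else 0) = ∑ k : Fin d, g k := by
  have h1 := Fin.sum_univ_eq_sum_range (fun i => if h : i < d then g ⟨i, h⟩ else 0) m
  have h2 := Fin.sum_univ_eq_sum_range (fun i => if h : i < d then g ⟨i, h⟩ else 0) d
  have h3 : (∑ i : Fin d, if h : (i : ℕ) < d then g ⟨i, h⟩ else 0) = ∑ k : Fin d, g k := by
    refine Finset.sum_congr rfl fun i _ => ?_
    rw [dif_pos i.isLt, Fin.eta]
  have h4 : (∑ i ∈ Finset.range m, if h : i < d then g ⟨i, h⟩ else 0)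
      = ∑ i ∈ Finset.range d, if h : i < d then g ⟨i, h⟩ else 0 :=
    (Finset.sum_subset (Finset.range_subset_range.mpr hdm)
      (fun i _ hi => dif_neg (by simpa using hi))).symm
  rw [h1, h4, ← h2, h3]

/-- **Achievability direction of the minimum-norm representation lemma for two-layer quadratic
networks.** For a symmetric `Q ∈ ℝ^{d×d}` with eigenvalues `λ₁, …, λ_d` and any width `m ≥ d`,
there is a network `aᵀ σ(W x)` computing `x ↦ xᵀ Q x` using only the first `d` neurons, with
total squared norm `‖a‖² + ‖W‖_F² = 2 ∑ i |λ_i|^{2/3}`. -/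
theorem min_norm_quadratic_network_achievability
    (d m : ℕ) (hd : 0 < d) (hdm : d ≤ m)
    (Q : Matrix (Fin d) (Fin d) ℝ) (hQ : Q.IsHermitian) :
    ∃ (a : Fin m → ℝ) (W : Matrix (Fin m) (Fin d) ℝ),
      (∀ i : Fin m, d ≤ (i : ℕ) → a i = 0 ∧ ∀ j, W i j = 0) ∧
      (∀ x : Fin d → ℝ, ∑ i, a i * (W.mulVec x i) ^ 2 = x ⬝ᵥ Q.mulVec x) ∧
      (∑ i, a i ^ 2) + (∑ i, ∑ j, W i j ^ 2)
        = 2 * ∑ i : Fin d, |hQ.eigenvalues i| ^ ((2 : ℝ) / 3) := by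
  set U : Matrix (Fin d) (Fin d) ℝ := (hQ.eigenvectorUnitary : Matrix (Fin d) (Fin d) ℝ) with hU
  set lam : Fin d → ℝ := hQ.eigenvalues with hlam
  -- column orthonormality
  have hUnit : star U * U = 1 := (Matrix.mem_unitaryGroup_iff').mp hQ.eigenvectorUnitary.2
  have hcol : ∀ k : Fin d, ∑ j : Fin d, U j k * U j k = 1 := by
    intro k
    have := congrFun (congrFun hUnit k) k
    simpa [Matrix.mul_apply, Matrix.one_apply, Matrix.star_apply] using this
  -- cube-root scaling facts
  have hc3 : ∀ t : ℝ, 0 ≤ t → (t ^ ((1:ℝ)/3)) ^ (3:ℕ) = t := by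
    intro t ht
    rw [← Real.rpow_natCast (t ^ ((1:ℝ)/3)) 3, ← Real.rpow_mul ht]
    norm_num
  have hcube : ∀ k : Fin d, (Real.sign (lam k) * |lam k| ^ ((1:ℝ)/3)) *
      (|lam k| ^ ((1:ℝ)/3)) ^ 2 = lam k := by
    intro k
    rcases lt_trichotomy (lam k) 0 with h | h | h
    · have h3 := hc3 (-lam k) (by linarith)
      rw [Real.sign_of_neg h, abs_of_neg h]
      linear_combination -h3
    · simp [h, Real.zero_rpow (by norm_num : (1:ℝ)/3 ≠ 0)]
    · have h3 := hc3 (lam k) h.le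
      rw [Real.sign_of_pos h, abs_of_pos h]
      linear_combination h3
  have hsq : ∀ k : Fin d, (|lam k| ^ ((1:ℝ)/3)) ^ 2 = |lam k| ^ ((2:ℝ)/3) := by
    intro k
    rw [← Real.rpow_natCast (|lam k| ^ ((1:ℝ)/3)) 2, ← Real.rpow_mul (abs_nonneg _)]
    norm_num
  have hasq : ∀ k : Fin d, (Real.sign (lam k) * |lam k| ^ ((1:ℝ)/3)) ^ 2
      = |lam k| ^ ((2:ℝ)/3) := by
    intro k
    rcases eq_or_ne (lam k) 0 with h | h
    · simp [h, Real.zero_rpow (by norm_num : (2:ℝ)/3 ≠ 0),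
        Real.zero_rpow (by norm_num : (1:ℝ)/3 ≠ 0)]
    · rw [mul_pow, hsq k]
      rcases lt_or_gt_of_ne h with h' | h'
      · rw [Real.sign_of_neg h']; ring
      · rw [Real.sign_of_pos h']; ring
  refine ⟨fun i => if h : (i : ℕ) < d then
      Real.sign (lam ⟨i, h⟩) * |lam ⟨i, h⟩| ^ ((1:ℝ)/3) else 0,
    fun i j => if h : (i : ℕ) < d then |lam ⟨i, h⟩| ^ ((1:ℝ)/3) * U j ⟨i, h⟩ else 0,
    ?_, ?_, ?_⟩
  · intro i hi
    refine ⟨dif_neg (not_lt.mpr hi), fun j => dif_neg (not_lt.mpr hi)⟩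
  · intro x
    have hexp : ∀ x : Fin d → ℝ,
        (∑ i : Fin m, (if h : (i : ℕ) < d then
            Real.sign (lam ⟨i, h⟩) * |lam ⟨i, h⟩| ^ ((1:ℝ)/3) else 0) *
          (Matrix.mulVec (fun i j => if h : (i : ℕ) < d then
            |lam ⟨i, h⟩| ^ ((1:ℝ)/3) * U j ⟨i, h⟩ else 0) x i) ^ 2)
        = ∑ k : Fin d, lam k * (∑ j, U j k * x j) ^ 2 := by
      intro x
      have : ∀ i : Fin m, (if h : (i : ℕ) < d then
            Real.sign (lam ⟨i, h⟩) * |lam ⟨i, h⟩| ^ ((1:ℝ)/3) else 0) *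
          (Matrix.mulVec (fun i j => if h : (i : ℕ) < d then
            |lam ⟨i, h⟩| ^ ((1:ℝ)/3) * U j ⟨i, h⟩ else 0) x i) ^ 2
          = if h : (i : ℕ) < d then
              lam ⟨i, h⟩ * (∑ j, U j ⟨i, h⟩ * x j) ^ 2 else 0 := by
        intro i
        by_cases h : (i : ℕ) < d
        · simp only [dif_pos h, Matrix.mulVec, dotProduct]
          have : (∑ j, (|lam ⟨i, h⟩| ^ ((1:ℝ)/3) * U j ⟨i, h⟩) * x j)
              = |lam ⟨i, h⟩| ^ ((1:ℝ)/3) * ∑ j, U j ⟨i, h⟩ * x j := by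
            rw [Finset.mul_sum]; apply Finset.sum_congr rfl; intros; ring
          rw [this, mul_pow, ← mul_assoc, show ∀ a b c : ℝ, a * b * c = a * c * b by intros; ring]
          rw [show (Real.sign (lam ⟨i, h⟩) * |lam ⟨i, h⟩| ^ ((1:ℝ)/3)) *
            ((∑ j, U j ⟨i, h⟩ * x j) ^ 2) * ((|lam ⟨i, h⟩| ^ ((1:ℝ)/3)) ^ 2)
            = ((Real.sign (lam ⟨i, h⟩) * |lam ⟨i, h⟩| ^ ((1:ℝ)/3)) *
              (|lam ⟨i, h⟩| ^ ((1:ℝ)/3)) ^ 2) * (∑ j, U j ⟨i, h⟩ * x j) ^ 2 by ring,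
            hcube]
        · simp [dif_neg h]
      rw [Finset.sum_congr rfl (fun i _ => this i)]
      exact sum_extend d m hdm (fun k => lam k * (∑ j, U j k * x j) ^ 2)
    have hrhs : x ⬝ᵥ Q.mulVec x = ∑ k : Fin d, lam k * (∑ j, U j k * x j) ^ 2 := by
      conv_lhs => rw [hQ.spectral_theorem, Unitary.conjStarAlgAut_apply]
      rw [← Matrix.mulVec_mulVec, ← Matrix.mulVec_mulVec, Matrix.dotProduct_mulVec]
      simp only [dotProduct, Matrix.mulVec_diagonal, Matrix.vecMul, dotProduct,
        Matrix.mulVec, Matrix.star_apply, star_trivial, Function.comp_apply,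
        RCLike.ofReal_real_eq_id, id_eq]
      refine Finset.sum_congr rfl fun k _ => ?_
      simp only [Matrix.diagonal_apply, Function.comp_apply, id_eq, ite_mul, zero_mul,
        Finset.sum_ite_eq, Finset.mem_univ, if_true]
      have : (∑ j, (hQ.eigenvectorUnitary : Matrix (Fin d) (Fin d) ℝ) j k * x j)
          = ∑ j, U j k * x j := rfl
      have h2 : (∑ j, x j * (hQ.eigenvectorUnitary : Matrix (Fin d) (Fin d) ℝ) j k)
          = ∑ j, U j k * x j := Finset.sum_congr rfl fun j _ => mul_comm _ _
      rw [this, h2]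
      ring
    exact (hexp x).trans hrhs.symm
  · have h1 : (∑ i : Fin m, (if h : (i : ℕ) < d then
        Real.sign (lam ⟨i, h⟩) * |lam ⟨i, h⟩| ^ ((1:ℝ)/3) else 0) ^ 2)
        = ∑ k : Fin d, |lam k| ^ ((2:ℝ)/3) := by
      have : ∀ i : Fin m, (if h : (i : ℕ) < d then
          Real.sign (lam ⟨i, h⟩) * |lam ⟨i, h⟩| ^ ((1:ℝ)/3) else 0) ^ 2
          = if h : (i : ℕ) < d then |lam ⟨i, h⟩| ^ ((2:ℝ)/3) else 0 := by
        intro i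
        by_cases h : (i : ℕ) < d
        · rw [dif_pos h, dif_pos h, hasq]
        · simp [dif_neg h]
      rw [Finset.sum_congr rfl (fun i _ => this i)]
      exact sum_extend d m hdm (fun k => |lam k| ^ ((2:ℝ)/3))
    have h2 : (∑ i : Fin m, ∑ j, (if h : (i : ℕ) < d then
        |lam ⟨i, h⟩| ^ ((1:ℝ)/3) * U j ⟨i, h⟩ else 0) ^ 2)
        = ∑ k : Fin d, |lam k| ^ ((2:ℝ)/3) := by
      have : ∀ i : Fin m, (∑ j, (if h : (i : ℕ) < d then
          |lam ⟨i, h⟩| ^ ((1:ℝ)/3) * U j ⟨i, h⟩ else 0) ^ 2)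
          = if h : (i : ℕ) < d then |lam ⟨i, h⟩| ^ ((2:ℝ)/3) else 0 := by
        intro i
        by_cases h : (i : ℕ) < d
        · simp only [dif_pos h, mul_pow]
          rw [← Finset.mul_sum, show (∑ j, U j ⟨i, h⟩ ^ 2)
              = ∑ j, U j ⟨i, h⟩ * U j ⟨i, h⟩ from Finset.sum_congr rfl (fun j _ => sq (U j ⟨i, h⟩)),
            hcol, mul_one, hsq]
        · simp [dif_neg h]
      rw [Finset.sum_congr rfl (fun i _ => this i)]
      exact sum_extend d m hdm (fun k => |lam k| ^ ((2:ℝ)/3))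
    rw [h1, h2]; ring
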